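/- Let c > 0, A⁽¹⁾ = [[−1, c],[1/(4c), −1]], and A⁽²⁾ = [[−1, 1/(4c)],[c, −1]]. Then the Poincaré matrix P = exp(A⁽²⁾)·exp(A⁽¹⁾) equals e^{−2}·[[cosh²(1/2) + (1/(4c²))·sinh²(1/2), (2c + 1/(2c))·cosh(1/2)·sinh(1/2)],[(2c + 1/(2c))·cosh(1/2)·sinh(1/2), cosh²(1/2) + 4c²·sinh²(1/2)]]. -/

import Mathlib

set_option maxHeartbeats 2000000


open Matrix

lemma diag_fin_two (x y : ℝ) : (diagonal ![x, y] : Matrix (Fin 2) (Fin 2) ℝ) = !![x, 0; 0, y] := by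
  ext i j
  fin_cases i <;> fin_cases j <;> simp [diagonal]

lemma entry_tac_aux : True := trivial

lemma exp_conj_two (U V D : Matrix (Fin 2) (Fin 2) ℝ) (x y : ℝ)
    (hUV : U * V = 1) (hD : D = diagonal ![x, y]) :
    NormedSpace.exp (U * D * V) = U * diagonal ![Real.exp x, Real.exp y] * V := by
  have hunit : IsUnit U := ⟨⟨U, V, hUV, mul_eq_one_comm.mp hUV⟩, rfl⟩
  have hinv : U⁻¹ = V := inv_eq_right_inv hUV
  rw [← hinv, hD, Matrix.exp_conj U _ hunit, Matrix.exp_diagonal, Pi.exp_def]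
  have hfun : (fun i => NormedSpace.exp (![x, y] i)) = ![Real.exp x, Real.exp y] := by
    funext i
    fin_cases i <;> simp [← Real.exp_eq_exp_ℝ]
  rw [hfun]

theorem stmt_17 (c : ℝ) (hc : 0 < c) :
    NormedSpace.exp (!![-1, 1/(4*c); c, -1] : Matrix (Fin 2) (Fin 2) ℝ)
        * NormedSpace.exp (!![-1, c; 1/(4*c), -1] : Matrix (Fin 2) (Fin 2) ℝ)
      = Real.exp (-2) •
        !![Real.cosh (1/2) ^ 2 + (1/(4*c^2)) * Real.sinh (1/2) ^ 2,
             (2*c + 1/(2*c)) * Real.cosh (1/2) * Real.sinh (1/2);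
           (2*c + 1/(2*c)) * Real.cosh (1/2) * Real.sinh (1/2),
             Real.cosh (1/2) ^ 2 + 4*c^2 * Real.sinh (1/2) ^ 2] := by
  have hc' : c ≠ 0 := ne_of_gt hc
  have hUV₁ : (!![2*c, 2*c; 1, -1] : Matrix (Fin 2) (Fin 2) ℝ)
      * !![1/(4*c), 1/2; 1/(4*c), -(1/2)] = 1 := by
    rw [show (1 : Matrix (Fin 2) (Fin 2) ℝ) = !![1,0;0,1] by
      ext i j; fin_cases i <;> fin_cases j <;> simp]
    rw [Matrix.mul_fin_two]
    ext i j
    fin_cases i <;> fin_cases j <;>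
      simp only [Matrix.of_apply, Matrix.cons_val', Matrix.cons_val_zero, Matrix.cons_val_one,
        Matrix.head_cons, Matrix.empty_val', Matrix.cons_val_fin_one, Matrix.head_fin_const] <;>
      field_simp <;> ring
  have hUV₂ : (!![1, 1; 2*c, -(2*c)] : Matrix (Fin 2) (Fin 2) ℝ)
      * !![1/2, 1/(4*c); 1/2, -(1/(4*c))] = 1 := by
    rw [show (1 : Matrix (Fin 2) (Fin 2) ℝ) = !![1,0;0,1] by
      ext i j; fin_cases i <;> fin_cases j <;> simp]
    rw [Matrix.mul_fin_two]
    ext i j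
    fin_cases i <;> fin_cases j <;>
      simp only [Matrix.of_apply, Matrix.cons_val', Matrix.cons_val_zero, Matrix.cons_val_one,
        Matrix.head_cons, Matrix.empty_val', Matrix.cons_val_fin_one, Matrix.head_fin_const] <;>
      field_simp <;> ring
  have hA₁ : (!![-1, c; 1/(4*c), -1] : Matrix (Fin 2) (Fin 2) ℝ)
      = !![2*c, 2*c; 1, -1] * diagonal ![-(1/2), -(3/2)] * !![1/(4*c), 1/2; 1/(4*c), -(1/2)] := by
    rw [diag_fin_two, Matrix.mul_fin_two, Matrix.mul_fin_two]
    ext i j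
    fin_cases i <;> fin_cases j <;>
      simp only [Matrix.of_apply, Matrix.cons_val', Matrix.cons_val_zero, Matrix.cons_val_one,
        Matrix.head_cons, Matrix.empty_val', Matrix.cons_val_fin_one, Matrix.head_fin_const] <;>
      field_simp <;> ring
  have hA₂ : (!![-1, 1/(4*c); c, -1] : Matrix (Fin 2) (Fin 2) ℝ)
      = !![1, 1; 2*c, -(2*c)] * diagonal ![-(1/2), -(3/2)] * !![1/2, 1/(4*c); 1/2, -(1/(4*c))] := by
    rw [diag_fin_two, Matrix.mul_fin_two, Matrix.mul_fin_two]
    ext i j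
    fin_cases i <;> fin_cases j <;>
      simp only [Matrix.of_apply, Matrix.cons_val', Matrix.cons_val_zero, Matrix.cons_val_one,
        Matrix.head_cons, Matrix.empty_val', Matrix.cons_val_fin_one, Matrix.head_fin_const] <;>
      field_simp <;> ring
  rw [hA₁, hA₂, exp_conj_two _ _ _ _ _ hUV₁ rfl, exp_conj_two _ _ _ _ _ hUV₂ rfl]
  rw [diag_fin_two]
  set a := Real.exp (1/2) with ha
  have ha0 : a ≠ 0 := Real.exp_ne_zero _
  have hexp1 : Real.exp (-(1/2)) = a⁻¹ := by rw [ha, ← Real.exp_neg]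
  have hexp3 : Real.exp (-(3/2)) = a⁻¹ ^ 3 := by
    rw [ha, ← Real.exp_neg, ← Real.exp_nat_mul]; norm_num
  have hexp2 : Real.exp (-2) = a⁻¹ ^ 4 := by
    rw [ha, ← Real.exp_neg, ← Real.exp_nat_mul]; norm_num
  have hcosh : Real.cosh (1/2) = (a + a⁻¹) / 2 := by
    rw [Real.cosh_eq, ha, Real.exp_neg]
  have hsinh : Real.sinh (1/2) = (a - a⁻¹) / 2 := by
    rw [Real.sinh_eq, ha, Real.exp_neg]
  rw [hexp1, hexp3, hexp2, hcosh, hsinh]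
  rw [Matrix.mul_fin_two, Matrix.mul_fin_two, Matrix.mul_fin_two, Matrix.mul_fin_two,
    Matrix.mul_fin_two]
  ext i j
  rw [Matrix.smul_apply]
  fin_cases i <;> fin_cases j <;>
    simp only [Matrix.of_apply, Matrix.cons_val', Matrix.cons_val_zero, Matrix.cons_val_one,
      Matrix.head_cons, Matrix.empty_val', Matrix.cons_val_fin_one, Matrix.head_fin_const,
      smul_eq_mul, Fin.zero_eta, Fin.mk_one] <;>
    field_simp <;> ring
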